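/- Let Y be a regular surface (2-dimensional regular excellent scheme), E_1,…,E_r the exceptional curves of a resolution of a normal surface singularity, with negative-definite symmetric intersection matrix (E_i · E_j). Then for any divisor D supported on ∪E_i with D · E_i ≥ 0 for all i, one has D ≤ 0 (i.e., -D is effective). -/

import Mathlib

open Matrix


/-- Negativity lemma for the exceptional intersection matrix of a resolution of a
normal surface singularity: if `A = (Eᵢ · Eⱼ)` is a symmetric negative-definite matrix
with nonnegative off-diagonal entries and `D = ∑ xᵢ Eᵢ` satisfies `D · Eᵢ ≥ 0` for all
`i`, then `D ≤ 0`, i.e. all `xᵢ ≤ 0`. -/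
theorem stmt5 (r : ℕ) (A : Matrix (Fin r) (Fin r) ℝ) (hsymm : A.IsSymm)
    (hneg : (-A).PosDef) (hoff : ∀ i j, i ≠ j → 0 ≤ A i j)
    (x : Fin r → ℝ) (hx : ∀ i, 0 ≤ A.mulVec x i) :
    ∀ i, x i ≤ 0 := by
  intro i
  by_contra hcon
  push_neg at hcon
  set p : Fin r → ℝ := fun j => max (x j) 0 with hp
  set n : Fin r → ℝ := fun j => max (-x j) 0 with hn
  have hpnn : ∀ j, 0 ≤ p j := fun j => le_max_right _ _
  have hnnn : ∀ j, 0 ≤ n j := fun j => le_max_right _ _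
  have hpn0 : ∀ j, p j * n j = 0 := by
    intro j
    rcases le_total (x j) 0 with h | h
    · simp [hp, max_eq_right h]
    · simp [hn, max_eq_right (neg_nonpos_of_nonneg h)]
  have hxpn : x = p - n := by
    funext j
    rcases le_total (x j) 0 with h | h
    · simp [hp, hn, max_eq_right h, max_eq_left (neg_nonneg_of_nonpos h)]
    · simp [hp, hn, max_eq_left h, max_eq_right (neg_nonpos_of_nonneg h)]
  have hpnz : p ≠ 0 := by
    intro h0
    have := congrFun h0 i
    simp only [hp, Pi.zero_apply] at this
    have : x i ≤ 0 := by
      rcases max_cases (x i) 0 with ⟨h1, h2⟩ | ⟨h1, h2⟩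
      · rw [h1] at this; exact this.le
      · exact h2.le
    linarith
  have key : 0 < p ⬝ᵥ (-A).mulVec p := by
    have h := hneg.dotProduct_mulVec_pos hpnz
    rwa [star_trivial] at h
  have h1 : 0 ≤ p ⬝ᵥ A.mulVec x :=
    Finset.sum_nonneg fun j _ => mul_nonneg (hpnn j) (hx j)
  have h2 : 0 ≤ p ⬝ᵥ A.mulVec n := by
    unfold dotProduct Matrix.mulVec dotProduct
    refine Finset.sum_nonneg fun a _ => ?_
    rw [Finset.mul_sum]
    refine Finset.sum_nonneg fun b _ => ?_
    rcases eq_or_ne a b with rfl | hab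
    · rw [show p a * (A a a * n a) = A a a * (p a * n a) by ring, hpn0 a, mul_zero]
    · exact mul_nonneg (hpnn a) (mul_nonneg (hoff a b hab) (hnnn b))
  have h3 : p ⬝ᵥ A.mulVec p = p ⬝ᵥ A.mulVec x + p ⬝ᵥ A.mulVec n := by
    rw [hxpn, Matrix.mulVec_sub, dotProduct_sub]
    ring
  have h4 : 0 ≤ p ⬝ᵥ A.mulVec p := by rw [h3]; linarith
  have h5 : p ⬝ᵥ (-A).mulVec p = -(p ⬝ᵥ A.mulVec p) := by
    rw [Matrix.neg_mulVec, dotProduct_neg]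
  linarith [key, h4, h5 ▸ key]
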